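/- Suppose Z > 0, n ≥ 1 and U(n) ≥ 8. Then g̃(U(n) − 8) ≤ exp((64 − 16·U(n))/(16·n)). -/
import Mathlib


noncomputable def erf (x : ℝ) : ℝ := ∫ s in (0:ℝ)..x, Real.exp (-(s ^ 2) / 2)

noncomputable def gtilde (n Z x : ℝ) : ℝ :=
  Real.sqrt (n / 8) * Z * erf (x / Real.sqrt (8 * n)) * Real.exp (x ^ 2 / (16 * n))

lemma erf_mono {a b : ℝ} (h : a ≤ b) : erf a ≤ erf b := by
  unfold erf
  have hc : Continuous fun s : ℝ => Real.exp (-(s ^ 2) / 2) := by continuity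
  have hi : ∀ x y : ℝ, IntervalIntegrable (fun s : ℝ => Real.exp (-(s ^ 2) / 2))
      MeasureTheory.volume x y := fun x y => hc.intervalIntegrable x y
  have hsplit := intervalIntegral.integral_add_adjacent_intervals (hi 0 a) (hi a b)
  have hpos : 0 ≤ ∫ s in a..b, Real.exp (-(s ^ 2) / 2) :=
    intervalIntegral.integral_nonneg h (fun x _ => (Real.exp_pos _).le)
  linarith [hsplit, hpos]

/-- `g̃(U(n) − 8) ≤ exp((64 − 16·U(n))/(16·n))` whenever `U(n) ≥ 8`. -/
theorem gtilde_at_U_sub_eight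
    (n Z : ℝ) (hn1 : 1 ≤ n) (hZpos : 0 < Z)
    (U : ℝ) (hU0 : 0 ≤ U) (hU1 : gtilde n Z U = 1) (hU8 : 8 ≤ U) :
    gtilde n Z (U - 8) ≤ Real.exp ((64 - 16 * U) / (16 * n)) := by
  have hn0 : (0:ℝ) < n := lt_of_lt_of_le one_pos hn1
  have hexp : Real.exp ((U - 8) ^ 2 / (16 * n))
      = Real.exp (U ^ 2 / (16 * n)) * Real.exp ((64 - 16 * U) / (16 * n)) := by
    rw [← Real.exp_add]
    congr 1
    field_simp
    ring
  have hmono : erf ((U - 8) / Real.sqrt (8 * n)) ≤ erf (U / Real.sqrt (8 * n)) := by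
    apply erf_mono
    gcongr
    linarith
  unfold gtilde at hU1 ⊢
  rw [hexp, show Real.sqrt (n / 8) * Z * erf ((U - 8) / Real.sqrt (8 * n)) *
      (Real.exp (U ^ 2 / (16 * n)) * Real.exp ((64 - 16 * U) / (16 * n)))
      = (Real.sqrt (n / 8) * Z * erf ((U - 8) / Real.sqrt (8 * n)) *
        Real.exp (U ^ 2 / (16 * n))) * Real.exp ((64 - 16 * U) / (16 * n)) by ring]
  calc (Real.sqrt (n / 8) * Z * erf ((U - 8) / Real.sqrt (8 * n)) *
        Real.exp (U ^ 2 / (16 * n))) * Real.exp ((64 - 16 * U) / (16 * n))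
      ≤ (Real.sqrt (n / 8) * Z * erf (U / Real.sqrt (8 * n)) *
        Real.exp (U ^ 2 / (16 * n))) * Real.exp ((64 - 16 * U) / (16 * n)) := by
        gcongr
    _ = Real.exp ((64 - 16 * U) / (16 * n)) := by rw [hU1, one_mul]
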